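/- Every symmetric (n,k,λ)-design is a mediated family of blocks; in particular, the family of blocks of a symmetric (n,k,λ)-design has a system of distinct representatives. -/
import Mathlib


/-- A family of `n` blocks on the point set `Fin n` is 2-covering if every pair of
distinct points is contained in some block. -/
def TwoCovering {n : ℕ} (F : Fin n → Finset (Fin n)) : Prop :=
  ∀ x y : Fin n, x ≠ y → ∃ i : Fin n, x ∈ F i ∧ y ∈ F i

/-- A family has a system of distinct representatives if one can pick pairwise
distinct points, one from each block. -/
def HasSDR {n : ℕ} (F : Fin n → Finset (Fin n)) : Prop :=
  ∃ r : Fin n → Fin n, Function.Injective r ∧ ∀ i : Fin n, r i ∈ F i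

/-- A family of `n` blocks on `Fin n` (hence symmetric) is mediated if it is
2-covering and has an SDR. -/
def MediatedFamily {n : ℕ} (F : Fin n → Finset (Fin n)) : Prop :=
  TwoCovering F ∧ HasSDR F

/-- The maximum cardinality of a block of the family. -/
def mcard {n : ℕ} (F : Fin n → Finset (Fin n)) : ℕ :=
  Finset.univ.sup fun i => (F i).card

/-- `μ⁻(n)`: the minimum of `mcard F` over all mediated families on `[n]`. -/
noncomputable def muMinus (n : ℕ) : ℕ :=
  sInf { m : ℕ | ∃ F : Fin n → Finset (Fin n), MediatedFamily F ∧ mcard F = m }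

/-- Every symmetric `(n,k,λ)`-design is a mediated family of blocks; in particular
it has a system of distinct representatives. (A symmetric design has `n` blocks
`B₁,…,Bₙ` on `n` points, each block of size `k`, with `n > k ≥ 2`, `λ ≥ 1`, and
every pair of distinct points lying in exactly `λ` blocks.) -/
theorem symmetric_design_mediated' (n k lam : ℕ) (hk : 2 ≤ k) (hkn : k < n)
    (hlam : 1 ≤ lam) (B : Fin n → Finset (Fin n))
    (hblock : ∀ i : Fin n, (B i).card = k)
    (hpair : ∀ x y : Fin n, x ≠ y →
      (Finset.univ.filter fun i => x ∈ B i ∧ y ∈ B i).card = lam) :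
    (∀ x y : Fin n, x ≠ y → ∃ i : Fin n, x ∈ B i ∧ y ∈ B i) ∧
    (∃ r : Fin n → Fin n, Function.Injective r ∧ ∀ i : Fin n, r i ∈ B i) := by
  -- replication number
  set r : Fin n → ℕ := fun x => (Finset.univ.filter fun i => x ∈ B i).card with hr
  have hrep : ∀ x : Fin n, r x * (k - 1) = (n - 1) * lam := by
    intro x
    have h1 : ∑ y ∈ Finset.univ.erase x,
        (Finset.univ.filter fun i => x ∈ B i ∧ y ∈ B i).card = (n - 1) * lam := by
      rw [Finset.sum_congr rfl fun y hy => hpair x y (Finset.ne_of_mem_erase hy).symm]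
      simp [Finset.card_erase_of_mem, mul_comm]
    rw [← h1]
    simp only [hr, Finset.card_filter]
    rw [Finset.sum_comm, Finset.sum_mul]
    refine Finset.sum_congr rfl fun i _ => ?_
    by_cases hx : x ∈ B i
    · simp only [hx, true_and, if_true, one_mul]
      have : ∑ y ∈ Finset.univ.erase x, (if y ∈ B i then 1 else 0)
          = ((Finset.univ.erase x).filter (· ∈ B i)).card := by
        rw [Finset.card_filter]
      rw [this]
      have he : (Finset.univ.erase x).filter (· ∈ B i) = (B i).erase x := by
        ext y; simp [Finset.mem_erase, and_comm]
      rw [he, Finset.card_erase_of_mem hx, hblock]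
    · simp [hx]
  have hk1 : 0 < k - 1 := by omega
  have hrconst : ∀ x y : Fin n, r x = r y := fun x y =>
    Nat.eq_of_mul_eq_mul_right hk1 ((hrep x).trans (hrep y).symm)
  have hsum : ∑ x : Fin n, r x = n * k := by
    simp only [hr, Finset.card_filter]
    rw [Finset.sum_comm]
    have : ∀ i : Fin n, ∑ x : Fin n, (if x ∈ B i then 1 else 0) = k := by
      intro i
      rw [← Finset.card_filter]
      have : Finset.univ.filter (· ∈ B i) = B i := by ext y; simp
      rw [this, hblock]
    simp [this, Finset.sum_const, mul_comm]
  have hn : 0 < n := by omega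
  have hrk : ∀ x : Fin n, r x = k := by
    intro x
    have : ∑ y : Fin n, r y = n * r x := by
      rw [Finset.sum_congr rfl fun y _ => hrconst y x]
      simp [mul_comm]
    have := this.symm.trans hsum
    exact (Nat.eq_of_mul_eq_mul_left hn this.symm).symm
  constructor
  · -- two-covering
    intro x y hxy
    have := hpair x y hxy
    have hpos : 0 < (Finset.univ.filter fun i => x ∈ B i ∧ y ∈ B i).card := by omega
    obtain ⟨i, hi⟩ := Finset.card_pos.mp hpos
    exact ⟨i, (Finset.mem_filter.mp hi).2⟩
  · -- SDR via Hall
    rw [← Finset.all_card_le_biUnion_card_iff_exists_injective]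
    intro S
    set U := S.biUnion B with hU
    have hkpos : 0 < k := by omega
    have key : S.card * k ≤ U.card * k := by
      have h1 : S.card * k = ∑ i ∈ S, (B i).card := by
        simp [hblock, mul_comm]
      have h2 : ∑ i ∈ S, (B i).card
          = ∑ y ∈ U, ∑ i ∈ S, (if y ∈ B i then 1 else 0) := by
        rw [Finset.sum_comm]
        refine Finset.sum_congr rfl fun i hi => ?_
        rw [← Finset.card_filter]
        congr 1
        ext y
        simp only [Finset.mem_filter, hU, Finset.mem_biUnion]
        exact ⟨fun hy => ⟨⟨i, hi, hy⟩, hy⟩, And.right⟩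
      have h3 : ∀ y ∈ U, ∑ i ∈ S, (if y ∈ B i then 1 else 0) ≤ k := by
        intro y _
        rw [← Finset.card_filter, ← hrk y]
        exact Finset.card_le_card (Finset.filter_subset_filter _ (Finset.subset_univ S))
      calc S.card * k = ∑ y ∈ U, ∑ i ∈ S, (if y ∈ B i then 1 else 0) := h1.trans h2
        _ ≤ ∑ _y ∈ U, k := Finset.sum_le_sum h3
        _ = U.card * k := by simp [mul_comm]
    exact Nat.le_of_mul_le_mul_right key hkpos

theorem symmetric_design_mediated (n k lam : ℕ) (hk : 2 ≤ k) (hkn : k < n)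
    (hlam : 1 ≤ lam) (B : Fin n → Finset (Fin n))
    (hblock : ∀ i : Fin n, (B i).card = k)
    (hpair : ∀ x y : Fin n, x ≠ y →
      (Finset.univ.filter fun i => x ∈ B i ∧ y ∈ B i).card = lam) :
    MediatedFamily B ∧ HasSDR B := by
  obtain ⟨h1, h2⟩ := symmetric_design_mediated' n k lam hk hkn hlam B hblock hpair
  exact ⟨⟨h1, h2⟩, h2⟩
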